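/- Consider the univariate decision problem: Y ∼ N(θ, σ²) with θ ∈ [−τ, τ], τ > 0. For the threshold decision rule δ₀(Y) = 1{Y ≥ 0}, the maximum regret sup_{θ ∈ [−τ,τ]} R(δ₀, θ), where R(δ, θ) = θ·Φ(−θ/σ) for θ ≥ 0 and R(δ, θ) = (−θ)·Φ(θ/σ) for θ < 0, equals τ·Φ(−τ/σ) if τ ≤ a*σ, and a*σ·Φ(−a*) if τ > a*σ. -/

import Mathlib

/-- The density of the standard normal distribution. -/
noncomputable def stdGaussianPDF (x : ℝ) : ℝ :=
  (Real.sqrt (2 * Real.pi))⁻¹ * Real.exp (-(x ^ 2) / 2)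

/-- The cumulative distribution function of the standard normal distribution. -/
noncomputable def stdGaussianCDF (x : ℝ) : ℝ :=
  ∫ t in Set.Iic x, stdGaussianPDF t

open MeasureTheory Real Set Filter

lemma sgp_pos (x : ℝ) : 0 < stdGaussianPDF x := by
  unfold stdGaussianPDF; positivity

lemma sgp_eq (x : ℝ) : stdGaussianPDF x
    = (Real.sqrt (2 * Real.pi))⁻¹ * Real.exp (-(2⁻¹) * x ^ 2) := by
  unfold stdGaussianPDF; ring_nf

lemma sgp_cont : Continuous stdGaussianPDF := by
  unfold stdGaussianPDF; continuity

lemma sgp_integrable : Integrable stdGaussianPDF := by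
  have := (integrable_exp_neg_mul_sq (by norm_num : (0:ℝ) < 2⁻¹)).const_mul
    (Real.sqrt (2 * Real.pi))⁻¹
  apply this.congr
  filter_upwards with x
  rw [sgp_eq]

lemma sgp_even (x : ℝ) : stdGaussianPDF (-x) = stdGaussianPDF x := by
  unfold stdGaussianPDF; ring_nf

lemma sgp_hasDeriv (x : ℝ) : HasDerivAt stdGaussianPDF (-x * stdGaussianPDF x) x := by
  have h : HasDerivAt (fun t : ℝ => -(t ^ 2) / 2) (-x) x := by
    have := ((hasDerivAt_pow 2 x).neg).div_const 2
    refine this.congr_deriv ?_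
    push_cast
    ring
  have h2 := (h.exp.const_mul (Real.sqrt (2 * Real.pi))⁻¹)
  unfold stdGaussianPDF
  refine h2.congr_deriv ?_
  ring

lemma sgc_hasDeriv (x : ℝ) : HasDerivAt stdGaussianCDF (stdGaussianPDF x) x := by
  have key : ∀ y : ℝ, stdGaussianCDF y = stdGaussianCDF 0 + ∫ t in (0:ℝ)..y, stdGaussianPDF t := by
    intro y
    have := intervalIntegral.integral_Iic_sub_Iic (μ := volume) (f := stdGaussianPDF) (a := 0) (b := y)
      sgp_integrable.integrableOn sgp_integrable.integrableOn
    unfold stdGaussianCDF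
    linarith [this]
  have h : HasDerivAt (fun y => stdGaussianCDF 0 + ∫ t in (0:ℝ)..y, stdGaussianPDF t)
      (stdGaussianPDF x) x := by
    have := intervalIntegral.integral_hasDerivAt_right
      (sgp_integrable.intervalIntegrable (a := 0) (b := x))
      (sgp_cont.stronglyMeasurableAtFilter _ _) sgp_cont.continuousAt
    simpa using this.const_add (stdGaussianCDF 0)
  exact h.congr_of_eventuallyEq (Filter.Eventually.of_forall key)

lemma neg_mul_integrable : Integrable (fun t : ℝ => -t * stdGaussianPDF t) := by
  have := ((integrable_mul_exp_neg_mul_sq (by norm_num : (0:ℝ) < 2⁻¹)).const_mul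
    (Real.sqrt (2 * Real.pi))⁻¹).neg
  apply this.congr
  filter_upwards with x
  simp only [Pi.neg_apply]
  rw [sgp_eq]; ring

lemma sgp_tendsto_atBot : Filter.Tendsto stdGaussianPDF atBot (nhds 0) := by
  have h2 : Tendsto (fun x : ℝ => x ^ 2) atBot atTop := by
    have := (tendsto_pow_atTop (α := ℝ) (n := 2) (by norm_num)).comp tendsto_neg_atBot_atTop
    exact this.congr fun x => by simp only [Function.comp_apply]; ring
  have h3 : Tendsto (fun x : ℝ => -(x ^ 2) / 2) atBot atBot :=
    (tendsto_neg_atTop_atBot.comp h2).atBot_div_const (by norm_num)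
  have h4 := Real.tendsto_exp_atBot.comp h3
  have h5 : Tendsto (fun x : ℝ => (Real.sqrt (2 * Real.pi))⁻¹ * Real.exp (-(x ^ 2) / 2))
      atBot (nhds ((Real.sqrt (2 * Real.pi))⁻¹ * 0)) := (h4.const_mul _)
  unfold stdGaussianPDF
  simpa using h5

/-- integral of (-t)*pdf over Iic c equals pdf c -/
lemma integral_neg_mul_sgp (c : ℝ) :
    ∫ t in Set.Iic c, -t * stdGaussianPDF t = stdGaussianPDF c := by
  have := integral_Iic_of_hasDerivAt_of_tendsto' (a := c)
    (f := stdGaussianPDF) (f' := fun t => -t * stdGaussianPDF t)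
    (fun x _ => sgp_hasDeriv x) neg_mul_integrable.integrableOn sgp_tendsto_atBot
  rw [this, sub_zero]

lemma mills (a : ℝ) (ha : 0 < a) : stdGaussianCDF (-a) ≤ stdGaussianPDF a / a := by
  have h1 : stdGaussianCDF (-a) ≤ ∫ t in Set.Iic (-a), (-t * stdGaussianPDF t) / a := by
    unfold stdGaussianCDF
    apply setIntegral_mono_on sgp_integrable.integrableOn
      (neg_mul_integrable.div_const a).integrableOn measurableSet_Iic
    intro t ht
    simp only [mem_Iic] at ht
    have hta : a ≤ -t := by linarith
    have hp := sgp_pos t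
    rw [le_div_iff₀ ha]
    nlinarith
  have h2 : ∫ t in Set.Iic (-a), (-t * stdGaussianPDF t) / a
      = (∫ t in Set.Iic (-a), -t * stdGaussianPDF t) / a := integral_div a _
  rw [h2, integral_neg_mul_sgp, sgp_even] at h1
  exact h1

lemma g_hasDeriv (a : ℝ) : HasDerivAt (fun a : ℝ => a * stdGaussianCDF (-a))
    (stdGaussianCDF (-a) - a * stdGaussianPDF a) a := by
  have h1 : HasDerivAt (fun x : ℝ => stdGaussianCDF (-x)) (-stdGaussianPDF (-a)) a := by
    have := (sgc_hasDeriv (-a)).comp a (hasDerivAt_neg a)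
    simpa [Function.comp_def] using this
  have h2 := (hasDerivAt_id a).mul h1
  refine h2.congr_deriv ?_
  simp only [id_eq, sgp_even]; ring

lemma g_cont : Continuous (fun a : ℝ => a * stdGaussianCDF (-a)) := by
  rw [continuous_iff_continuousAt]
  exact fun a => (g_hasDeriv a).continuousAt

lemma deriv_g : deriv (fun a : ℝ => a * stdGaussianCDF (-a))
    = fun a => stdGaussianCDF (-a) - a * stdGaussianPDF a :=
  funext fun a => (g_hasDeriv a).deriv

lemma g'_hasDeriv (a : ℝ) :
    HasDerivAt (fun a : ℝ => stdGaussianCDF (-a) - a * stdGaussianPDF a)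
      ((a ^ 2 - 2) * stdGaussianPDF a) a := by
  have h1 : HasDerivAt (fun x : ℝ => stdGaussianCDF (-x)) (-stdGaussianPDF (-a)) a := by
    have := (sgc_hasDeriv (-a)).comp a (hasDerivAt_neg a)
    simpa [Function.comp_def] using this
  have h2 := (hasDerivAt_id a).mul (sgp_hasDeriv a)
  have h3 := h1.sub h2
  refine h3.congr_deriv ?_
  simp only [id_eq, sgp_even]; ring

lemma g_anti : StrictAntiOn (fun a : ℝ => a * stdGaussianCDF (-a)) (Ici 1) := by
  apply strictAntiOn_of_deriv_neg (convex_Ici 1) g_cont.continuousOn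
  intro x hx
  rw [interior_Ici] at hx
  have hx1 : (1:ℝ) < x := hx
  rw [deriv_g]
  have hm := mills x (by linarith)
  have hp := sgp_pos x
  have hxx : 1 < x * x := by nlinarith
  have key : stdGaussianPDF x / x - x * stdGaussianPDF x < 0 := by
    rw [div_sub' (by positivity), div_neg_iff]
    right
    refine ⟨?_, by linarith⟩
    nlinarith [mul_lt_mul_of_pos_right hxx hp]
  show stdGaussianCDF (-x) - x * stdGaussianPDF x < 0
  linarith

lemma g_concave : StrictConcaveOn ℝ (Icc (0:ℝ) 1) (fun a : ℝ => a * stdGaussianCDF (-a)) := by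
  apply strictConcaveOn_of_deriv2_neg (convex_Icc 0 1) g_cont.continuousOn
  intro x hx
  rw [interior_Icc] at hx
  have hd2 : deriv^[2] (fun a : ℝ => a * stdGaussianCDF (-a)) x
      = (x ^ 2 - 2) * stdGaussianPDF x := by
    show deriv (deriv (fun a : ℝ => a * stdGaussianCDF (-a))) x = _
    rw [deriv_g]
    exact (g'_hasDeriv x).deriv
  rw [hd2]
  have hx2 : x ^ 2 - 2 < 0 := by nlinarith [hx.1, hx.2]
  exact mul_neg_of_neg_of_pos hx2 (sgp_pos x)

lemma g_mono {astar : ℝ} (hastar0 : 0 ≤ astar)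
    (hmax : ∀ a, 0 ≤ a → a * stdGaussianCDF (-a) ≤ astar * stdGaussianCDF (-astar))
    {x y : ℝ} (hx : 0 ≤ x) (hxy : x ≤ y) (hy : y ≤ astar) :
    x * stdGaussianCDF (-x) ≤ y * stdGaussianCDF (-y) := by
  have h1 : astar ≤ 1 := by
    by_contra h
    push_neg at h
    have h2 : astar * stdGaussianCDF (-astar) < 1 * stdGaussianCDF (-(1:ℝ)) :=
      g_anti (mem_Ici.mpr le_rfl) (mem_Ici.mpr h.le) h
    have h3 := hmax 1 zero_le_one
    linarith
  rcases eq_or_lt_of_le hxy with rfl | hxy'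
  · exact le_rfl
  rcases eq_or_lt_of_le hy with rfl | hy'
  · exact hmax x hx
  -- x < y < astar
  set l : ℝ := (astar - y) / (astar - x) with hl
  set m : ℝ := (y - x) / (astar - x) with hm
  have hax : 0 < astar - x := by linarith
  have hl0 : 0 ≤ l := div_nonneg (by linarith) hax.le
  have hm0 : 0 ≤ m := by
    apply div_nonneg _ hax.le; linarith
  have hsum : l + m = 1 := by
    rw [hl, hm, ← add_div, div_eq_one_iff_eq hax.ne']
    ring
  have hcomb : l * x + m * astar = y := by
    rw [hl, hm]
    field_simp
    ring
  have hxmem : x ∈ Icc (0:ℝ) 1 := ⟨hx, by linarith⟩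
  have hamem : astar ∈ Icc (0:ℝ) 1 := ⟨hastar0, h1⟩
  have hcc := g_concave.concaveOn.2 hxmem hamem hl0 hm0 hsum
  simp only [smul_eq_mul] at hcc
  rw [hcomb] at hcc
  have hga := hmax x hx
  have h5 : m * (x * stdGaussianCDF (-x)) ≤ m * (astar * stdGaussianCDF (-astar)) :=
    mul_le_mul_of_nonneg_left hga hm0
  calc x * stdGaussianCDF (-x) = (l + m) * (x * stdGaussianCDF (-x)) := by rw [hsum]; ring
    _ = l * (x * stdGaussianCDF (-x)) + m * (x * stdGaussianCDF (-x)) := by ring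
    _ ≤ l * (x * stdGaussianCDF (-x)) + m * (astar * stdGaussianCDF (-astar)) := by linarith
    _ ≤ y * stdGaussianCDF (-y) := hcc


/-- In the univariate problem `Y ∼ N(θ, σ²)`, `θ ∈ [−τ, τ]`, `τ > 0`, the maximum regret
of the threshold rule `δ₀(Y) = 1{Y ≥ 0}`, whose regret is `θ·Φ(−θ/σ)` for `θ ≥ 0` and
`(−θ)·Φ(θ/σ)` for `θ < 0`, equals `τ·Φ(−τ/σ)` if `τ ≤ a*σ` and `a*σ·Φ(−a*)` if
`τ > a*σ`, where `a*` is the unique maximizer of `a·Φ(−a)` over `[0, ∞)`. -/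

theorem maxRegret_threshold_univariate (σ τ astar : ℝ) (hσ : 0 < σ) (hτ : 0 < τ)
    (hastar0 : 0 ≤ astar)
    (hmax : ∀ a, 0 ≤ a → a * stdGaussianCDF (-a) ≤ astar * stdGaussianCDF (-astar))
    (huniq : ∀ a, 0 ≤ a →
      (∀ b, 0 ≤ b → b * stdGaussianCDF (-b) ≤ a * stdGaussianCDF (-a)) → a = astar) :
    sSup ((fun θ : ℝ => if 0 ≤ θ then θ * stdGaussianCDF (-(θ / σ))
        else -θ * stdGaussianCDF (θ / σ)) '' Set.Icc (-τ) τ) =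
      if τ ≤ astar * σ then τ * stdGaussianCDF (-(τ / σ))
      else astar * σ * stdGaussianCDF (-astar) := by
  have hσ' : σ ≠ 0 := hσ.ne'
  set f : ℝ → ℝ := fun θ => if 0 ≤ θ then θ * stdGaussianCDF (-(θ / σ))
    else -θ * stdGaussianCDF (θ / σ) with hf
  have hrep : ∀ θ : ℝ, f θ = σ * (|θ| / σ * stdGaussianCDF (-(|θ| / σ))) := by
    intro θ
    by_cases h : 0 ≤ θ
    · simp only [hf, if_pos h, abs_of_nonneg h]
      field_simp
    · simp only [hf, if_neg h, abs_of_neg (lt_of_not_ge h)]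
      have e : -(-θ / σ) = θ / σ := by ring
      rw [e]
      field_simp
  by_cases hc : τ ≤ astar * σ
  · rw [if_pos hc]
    apply IsGreatest.csSup_eq
    constructor
    · exact ⟨τ, ⟨by linarith, le_rfl⟩, by simp only [hf]; rw [if_pos hτ.le]⟩
    · rintro v ⟨θ, hθ, rfl⟩
      rw [hrep θ]
      have habs : |θ| ≤ τ := abs_le.mpr ⟨hθ.1, hθ.2⟩
      have h1 : |θ| / σ ≤ τ / σ := by gcongr
      have h2 : τ / σ ≤ astar := (div_le_iff₀ hσ).mpr hc
      have h3 := g_mono hastar0 hmax (div_nonneg (abs_nonneg θ) hσ.le) h1 h2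
      have h4 : τ * stdGaussianCDF (-(τ / σ)) = σ * (τ / σ * stdGaussianCDF (-(τ / σ))) := by
        field_simp
      rw [h4]
      exact mul_le_mul_of_nonneg_left h3 hσ.le
  · rw [if_neg hc]
    push_neg at hc
    apply IsGreatest.csSup_eq
    constructor
    · have h0 : 0 ≤ astar * σ := mul_nonneg hastar0 hσ.le
      refine ⟨astar * σ, ⟨by linarith, hc.le⟩, ?_⟩
      simp only [hf]
      rw [if_pos h0, mul_div_cancel_right₀ _ hσ']
    · rintro v ⟨θ, hθ, rfl⟩
      rw [hrep θ]
      have h3 := hmax (|θ| / σ) (div_nonneg (abs_nonneg θ) hσ.le)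
      have h4 : astar * σ * stdGaussianCDF (-astar)
          = σ * (astar * stdGaussianCDF (-astar)) := by ring
      rw [h4]
      exact mul_le_mul_of_nonneg_left h3 hσ.le
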